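/- arXiv:2003.03896 — 3 statements merged into one kernel-verified Lean document; each statement's English description precedes it below -/
import Mathlib

section
/- For every partition γ with γ₁ ≤ ℓ(γ) + 2, the successor map ν satisfies dinv(ν(γ)) = dinv(γ) + 1 and defc(ν(γ)) = defc(γ). -/
/-- The `i`-th part (0-indexed) of a partition given as a list, with 0 padding. -/
def parts (γ : List ℕ) (i : ℕ) : ℕ := γ.getD i 0

/-- The number of cells in the (0-indexed) `j`-th column of the diagram. -/
def conj (γ : List ℕ) (j : ℕ) : ℕ :=
  (List.range γ.length).countP (fun i => decide (j < parts γ i))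

/-- The cells of the diagram of `γ`, 0-indexed. -/
def cells (γ : List ℕ) : Finset (ℕ × ℕ) :=
  (Finset.range γ.length ×ˢ Finset.range (γ.sum + 1)).filter (fun c => c.2 < parts γ c.1)

/-- The diagonal inversion count: cells with arm − leg ∈ {0,1}. -/
def dinv (γ : List ℕ) : ℕ :=
  ((cells γ).filter (fun c =>
    (parts γ c.1 : ℤ) - 1 - c.2 = (conj γ c.2 : ℤ) - 1 - c.1 ∨
    (parts γ c.1 : ℤ) - 1 - c.2 = (conj γ c.2 : ℤ) - 1 - c.1 + 1)).card

/-- Minimum triangle size: least `n` with `γᵢ ≤ n − i` for all `i`. -/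
noncomputable def mind (γ : List ℕ) : ℕ := sInf {n : ℕ | ∀ i < γ.length, parts γ i + i + 1 ≤ n}

/-- A list of naturals represents a partition if weakly decreasing with positive parts. -/
def IsPartition (γ : List ℕ) : Prop := List.Pairwise (· ≥ ·) γ ∧ ∀ x ∈ γ, 0 < x

/-- The successor map `ν`: prepend a part `ℓ(γ)+1`, decrement all old parts,
and delete the resulting zero parts. Meaningful when `γ₁ ≤ ℓ(γ) + 2`. -/
def nu (γ : List ℕ) : List ℕ :=
  ((γ.length + 1) :: γ.map (fun x => x - 1)).filter (fun x => x ≠ 0)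

lemma parts_eq_zero (γ : List ℕ) {i : ℕ} (h : γ.length ≤ i) : parts γ i = 0 := by
  simp [parts, List.getD_eq_default _ _ h, List.getElem?_eq_none (by omega : γ.length ≤ i)]

lemma parts_le_sum (γ : List ℕ) (i : ℕ) : parts γ i ≤ γ.sum := by
  by_cases h : i < γ.length
  · have : γ.getD i 0 ∈ γ := by
      rw [List.getD_eq_getElem _ _ h]; exact List.getElem_mem h
    exact List.single_le_sum (fun x _ => Nat.zero_le x) _ this
  · simp [parts_eq_zero γ (le_of_not_gt h)]

lemma mem_cells {γ : List ℕ} {c : ℕ × ℕ} : c ∈ cells γ ↔ c.2 < parts γ c.1 := by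
  constructor
  · intro h; exact (Finset.mem_filter.1 h).2
  · intro h
    refine Finset.mem_filter.2 ⟨Finset.mem_product.2 ⟨?_, ?_⟩, h⟩
    · by_contra hc
      rw [parts_eq_zero γ (le_of_not_gt (fun hh => hc (Finset.mem_range.2 hh)))] at h; omega
    · exact Finset.mem_range.2 (lt_of_lt_of_le h (Nat.le_succ_of_le (parts_le_sum γ c.1)))

lemma parts_zero (γ : List ℕ) : parts γ 0 = γ.headD 0 := by cases γ <;> rfl

lemma parts_mono {γ : List ℕ} (hs : List.Pairwise (· ≥ ·) γ) {i j : ℕ} (hij : i ≤ j) :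
    parts γ j ≤ parts γ i := by
  by_cases h : j < γ.length
  · have hi : i < γ.length := lt_of_le_of_lt hij h
    rw [parts, parts, List.getD_eq_getElem _ _ h, List.getD_eq_getElem _ _ hi]
    rcases eq_or_lt_of_le hij with rfl | hlt
    · exact le_refl _
    · exact List.pairwise_iff_getElem.1 hs i j hi h hlt
  · simp [parts_eq_zero γ (le_of_not_gt h)]

lemma conj_eq_card (γ : List ℕ) (j : ℕ) :
    conj γ j = ((Finset.range γ.length).filter (fun i => j < parts γ i)).card := by
  simp [conj, Finset.range, Finset.filter, Multiset.range, List.countP_eq_length_filter,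
    Multiset.filter_coe]

lemma downset_card {S : Finset ℕ} (h : ∀ a b : ℕ, a ≤ b → b ∈ S → a ∈ S) (x : ℕ) :
    x ∈ S ↔ x < S.card := by
  constructor
  · intro hx
    have hsub : Finset.range (x + 1) ⊆ S := fun a ha =>
      h a x (Nat.lt_succ_iff.1 (Finset.mem_range.1 ha)) hx
    have := Finset.card_le_card hsub
    simpa using this
  · intro hx
    by_contra hmem
    have hsub : S ⊆ Finset.range x := by
      intro y hy
      rw [Finset.mem_range]
      by_contra hyx
      exact hmem (h x y (le_of_not_gt hyx) hy)
    have := Finset.card_le_card hsub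
    simp at this; omega

lemma parts_eq_zero' (γ : List ℕ) {i : ℕ} (h : γ.length ≤ i) : parts γ i = 0 := by
  simp [parts, List.getD_eq_default _ _ h, List.getElem?_eq_none (by omega : γ.length ≤ i)]

lemma lt_conj_iff {γ : List ℕ} (hmono : ∀ i j : ℕ, i ≤ j → parts γ j ≤ parts γ i)
    (i j : ℕ) : i < conj γ j ↔ j < parts γ i := by
  rw [conj_eq_card]
  have hds : ∀ a b : ℕ, a ≤ b → b ∈ (Finset.range γ.length).filter (fun i => j < parts γ i) →
      a ∈ (Finset.range γ.length).filter (fun i => j < parts γ i) := by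
    intro a b hab hb
    rw [Finset.mem_filter, Finset.mem_range] at *
    exact ⟨lt_of_le_of_lt hab hb.1, lt_of_lt_of_le hb.2 (hmono a b hab)⟩
  rw [← downset_card hds i, Finset.mem_filter, Finset.mem_range]
  constructor
  · exact fun h => h.2
  · intro h
    refine ⟨?_, h⟩
    by_contra hc
    rw [parts_eq_zero' γ (le_of_not_gt hc)] at h; omega

lemma nat_eq_of_lt_iff {a b : ℕ} (h : ∀ i, (i < a ↔ i < b)) : a = b := by
  have h1 := h a; have h2 := h b; omega

lemma getD_all_zero {l : List ℕ} (h : ∀ x ∈ l, x = 0) (i : ℕ) : l.getD i 0 = 0 := by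
  by_cases hi : i < l.length
  · rw [List.getD_eq_getElem _ _ hi]; exact h _ (List.getElem_mem hi)
  · rw [List.getD_eq_default _ _ (le_of_not_gt hi)]

lemma filter_getD_of_sorted : ∀ (l : List ℕ), List.Pairwise (· ≥ ·) l →
    ∀ i, (l.filter (fun x => x ≠ 0)).getD i 0 = l.getD i 0 := by
  intro l
  induction l with
  | nil => intro _ i; rfl
  | cons a t ih =>
    intro hs i
    rcases List.pairwise_cons.1 hs with ⟨ha, ht⟩
    by_cases h0 : a = 0
    · subst h0
      have hall : ∀ x ∈ (0 : ℕ) :: t, x = 0 := by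
        intro x hx
        rcases List.mem_cons.1 hx with rfl | hx
        · rfl
        · have := ha x hx; omega
      have : ((0 : ℕ) :: t).filter (fun x => x ≠ 0) = [] := by
        rw [List.filter_eq_nil_iff]
        intro x hx; simpa using hall x hx
      rw [this, getD_all_zero hall]
      rfl
    · rw [List.filter_cons_of_pos (by simpa using h0)]
      cases i with
      | zero => rfl
      | succ n => simpa using ih ht n

lemma nu_eq (γ : List ℕ) :
    nu γ = (γ.length + 1) :: ((γ.map (fun x => x - 1)).filter (fun x => x ≠ 0)) := by
  rw [nu, List.filter_cons_of_pos (by simp)]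

lemma parts_nu_zero (γ : List ℕ) : parts (nu γ) 0 = γ.length + 1 := by
  rw [nu_eq]; rfl

lemma parts_nu_succ {γ : List ℕ} (hs : List.Pairwise (· ≥ ·) γ) (i : ℕ) :
    parts (nu γ) (i + 1) = parts γ i - 1 := by
  rw [nu_eq]
  have hsm : List.Pairwise (· ≥ ·) (γ.map (fun x => x - 1)) :=
    List.Pairwise.map _ (fun a b hab => Nat.sub_le_sub_right hab 1) hs
  show (((γ.map (fun x => x - 1)).filter (fun x => x ≠ 0))).getD i 0 = parts γ i - 1
  rw [filter_getD_of_sorted _ hsm i]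
  by_cases hi : i < γ.length
  · rw [parts, List.getD_eq_getElem _ _ (by simpa using hi), List.getD_eq_getElem _ _ hi]
    simp
  · rw [parts, List.getD_eq_default _ _ (by simpa using le_of_not_gt hi),
      List.getD_eq_default _ _ (le_of_not_gt hi)]

lemma sum_filter_ne_zero (l : List ℕ) : (l.filter (fun x => x ≠ 0)).sum = l.sum := by
  induction l with
  | nil => rfl
  | cons a t ih =>
    by_cases h : a = 0
    · subst h; simpa using ih
    · rw [List.filter_cons_of_pos (by simpa using h)]
      show a + (t.filter (fun x => x ≠ 0)).sum = a + t.sum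
      rw [ih]

lemma nu_sum {γ : List ℕ} (hpos : ∀ x ∈ γ, 0 < x) : (nu γ).sum = γ.sum + 1 := by
  rw [nu, sum_filter_ne_zero]
  have : ∀ l : List ℕ, (∀ x ∈ l, 0 < x) → (l.map (fun x => x - 1)).sum + l.length = l.sum := by
    intro l
    induction l with
    | nil => intro _; rfl
    | cons a t ih =>
      intro h
      have ha := h a (List.mem_cons_self)
      have := ih (fun x hx => h x (List.mem_cons_of_mem a hx))
      simp only [List.map_cons, List.sum_cons, List.length_cons]
      omega
  have h2 := this γ hpos
  simp only [List.sum_cons]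
  omega



section Main
variable {γ : List ℕ}

lemma parts_le_head (hs : List.Pairwise (· ≥ ·) γ) (i : ℕ) : parts γ i ≤ γ.headD 0 := by
  rw [← parts_zero]; exact parts_mono hs (Nat.zero_le i)

lemma parts_nu_mono (hs : List.Pairwise (· ≥ ·) γ) (hdom : γ.headD 0 ≤ γ.length + 2) :
    ∀ i j : ℕ, i ≤ j → parts (nu γ) j ≤ parts (nu γ) i := by
  have hle : ∀ k, parts (nu γ) k ≤ γ.length + 1 := by
    intro k
    cases k with
    | zero => rw [parts_nu_zero]
    | succ n =>
      rw [parts_nu_succ hs]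
      have := parts_le_head hs n
      omega
  intro i j hij
  cases i with
  | zero => rw [parts_nu_zero]; exact le_trans (hle j) (le_refl _)
  | succ n =>
    cases j with
    | zero => omega
    | succ m =>
      rw [parts_nu_succ hs, parts_nu_succ hs]
      exact Nat.sub_le_sub_right (parts_mono hs (by omega)) 1

lemma conj_zero (hpos : ∀ x ∈ γ, 0 < x) (hs : List.Pairwise (· ≥ ·) γ) :
    conj γ 0 = γ.length := by
  apply nat_eq_of_lt_iff
  intro i
  rw [lt_conj_iff (fun i j h => parts_mono hs h) i 0]
  constructor
  · intro h
    by_contra hc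
    rw [parts_eq_zero γ (le_of_not_gt hc)] at h; omega
  · intro h
    rw [parts, List.getD_eq_getElem _ _ h]
    exact hpos _ (List.getElem_mem h)

lemma conj_nu (hs : List.Pairwise (· ≥ ·) γ) (hdom : γ.headD 0 ≤ γ.length + 2)
    {j : ℕ} (hj : j ≤ γ.length) :
    conj (nu γ) j = conj γ (j + 1) + 1 := by
  apply nat_eq_of_lt_iff
  intro i
  rw [lt_conj_iff (parts_nu_mono hs hdom) i j]
  cases i with
  | zero =>
    rw [parts_nu_zero]
    constructor <;> intro <;> omega
  | succ n =>
    rw [parts_nu_succ hs]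
    have := lt_conj_iff (fun i j h => parts_mono hs h) n (j + 1)
    constructor <;> intro h
    · have : j + 1 < parts γ n := by omega
      have hn := (lt_conj_iff (fun i j h => parts_mono hs h) n (j + 1)).2 this
      omega
    · have hn := (lt_conj_iff (fun i j h => parts_mono hs h) n (j + 1)).1 (by omega)
      omega

end Main


def Qp (γ : List ℕ) (c : ℕ × ℕ) : Prop :=
  parts γ c.1 + c.1 = conj γ c.2 + c.2 ∨ parts γ c.1 + c.1 = conj γ c.2 + c.2 + 1

instance (γ : List ℕ) : DecidablePred (Qp γ) := fun c => by unfold Qp; infer_instance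

lemma dinv_eq_card (γ : List ℕ) : dinv γ = ((cells γ).filter (Qp γ)).card := by
  unfold dinv
  congr 1
  apply Finset.filter_congr
  intro c _
  unfold Qp
  constructor <;> intro h <;> omega

lemma X_eq_Y (hmono : ∀ i j : ℕ, i ≤ j → parts γ j ≤ parts γ i) (t : ℕ) :
    ((Finset.range (t+1)).filter (fun i => t < parts γ i + i)).card
      = ((Finset.range (t+1)).filter (fun k => t < conj γ k + k)).card := by
  apply Finset.card_nbij' (i := fun i => t - i) (j := fun k => t - k)
  · intro a ha
    rw [Finset.mem_coe, Finset.mem_filter, Finset.mem_range] at *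
    obtain ⟨ha1, ha2⟩ := ha
    have h1 : t - a < parts γ a := by omega
    have h2 := (lt_conj_iff hmono a (t - a)).2 h1
    beta_reduce
    constructor
    · omega
    · omega
  · intro k hk
    rw [Finset.mem_coe, Finset.mem_filter, Finset.mem_range] at *
    obtain ⟨hk1, hk2⟩ := hk
    have h1 : t - k < conj γ k := by omega
    have h2 := (lt_conj_iff hmono (t - k) k).1 h1
    beta_reduce
    constructor
    · omega
    · omega
  · intro a ha
    rw [Finset.mem_coe, Finset.mem_filter, Finset.mem_range] at ha
    beta_reduce
    omega
  · intro k hk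
    rw [Finset.mem_coe, Finset.mem_filter, Finset.mem_range] at hk
    beta_reduce
    omega


lemma count_split (f : ℕ → ℕ) (hf : ∀ i, i ≤ f i) (m : ℕ) :
    ((Finset.range (m+1)).filter (fun i => f i = m)).card
      + ((Finset.range (m+1)).filter (fun i => f i < m)).card
      + ((Finset.range (m+1)).filter (fun i => m < f i)).card = m + 1 := by
  classical
  have h1 : ((Finset.range (m+1)).filter (fun i => m < f i)).card
      + ((Finset.range (m+1)).filter (fun i => ¬ m < f i)).card = m + 1 := by
    rw [Finset.card_filter_add_card_filter_not (p := fun i => m < f i)]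
    simp
  have h2 : ((Finset.range (m+1)).filter (fun i => ¬ m < f i))
      = ((Finset.range (m+1)).filter (fun i => f i = m)) ∪
        ((Finset.range (m+1)).filter (fun i => f i < m)) := by
    rw [← Finset.filter_or]
    apply Finset.filter_congr
    intro x _; constructor <;> intro h <;> omega
  have h3 : Disjoint ((Finset.range (m+1)).filter (fun i => f i = m))
      ((Finset.range (m+1)).filter (fun i => f i < m)) := by
    apply Finset.disjoint_filter_filter'
    rw [disjoint_iff_inf_le]
    intro x hx
    simp only [Pi.inf_apply, inf_Prop_eq] at hx
    omega
  rw [h2, Finset.card_union_of_disjoint h3] at h1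
  omega

lemma count_lt (f : ℕ → ℕ) (hf : ∀ i, i ≤ f i) (k : ℕ) :
    ((Finset.range (k+2)).filter (fun i => f i < k+1)).card
      + ((Finset.range (k+1)).filter (fun i => k < f i)).card = k + 1 := by
  classical
  have h0 : ((Finset.range (k+2)).filter (fun i => f i < k+1))
      = ((Finset.range (k+1)).filter (fun i => f i < k+1)) := by
    rw [Finset.range_add_one (n := k+1), Finset.filter_insert, if_neg (by have := hf (k+1); omega)]
  rw [h0]
  have h1 : ((Finset.range (k+1)).filter (fun i => f i < k+1))
      = ((Finset.range (k+1)).filter (fun i => ¬ k < f i)) := by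
    apply Finset.filter_congr; intro x _; constructor <;> intro h <;> omega
  rw [h1]
  have := Finset.card_filter_add_card_filter_not (s := Finset.range (k+1))
    (p := fun i => k < f i)
  rw [Finset.card_range] at this
  omega


lemma count_eq (hmono : ∀ i j : ℕ, i ≤ j → parts γ j ≤ parts γ i) (m : ℕ) :
    ((Finset.range (m+1)).filter (fun i => parts γ i + i = m)).card
      = ((Finset.range (m+1)).filter (fun k => conj γ k + k = m)).card := by
  classical
  have hfp : ∀ i, i ≤ parts γ i + i := fun i => by omega
  have hfc : ∀ k, k ≤ conj γ k + k := fun k => by omega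
  have hs1 := count_split (fun i => parts γ i + i) hfp m
  have hs2 := count_split (fun k => conj γ k + k) hfc m
  have hX := X_eq_Y (γ := γ) hmono m
  cases m with
  | zero =>
    have e1 : ((Finset.range 1).filter (fun i => parts γ i + i < 0)) = ∅ :=
      Finset.filter_eq_empty_iff.2 (fun x _ => by omega)
    have e2 : ((Finset.range 1).filter (fun k => conj γ k + k < 0)) = ∅ :=
      Finset.filter_eq_empty_iff.2 (fun x _ => by omega)
    rw [e1] at hs1; rw [e2] at hs2
    simp only [Finset.card_empty] at hs1 hs2
    omega
  | succ k =>
    have hl1 := count_lt (fun i => parts γ i + i) hfp k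
    have hl2 := count_lt (fun k' => conj γ k' + k') hfc k
    have hX' := X_eq_Y (γ := γ) hmono k
    simp only [show k+1+1 = k+2 from rfl] at hs1 hs2 hX ⊢
    omega


lemma filter_split_card {α : Type*} (s : Finset α) (Q p : α → Prop)
    [DecidablePred Q] [DecidablePred p] :
    (s.filter Q).card = (s.filter (fun a => Q a ∧ p a)).card
      + (s.filter (fun a => Q a ∧ ¬ p a)).card := by
  rw [← Finset.filter_filter, ← Finset.filter_filter,
    Finset.card_filter_add_card_filter_not]

lemma peel (P : ℕ → Prop) [DecidablePred P] (n : ℕ) :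
    ((Finset.range (n+1)).filter P).card
      = ((Finset.range n).filter P).card + (if P n then 1 else 0) := by
  rw [Finset.range_add_one, Finset.filter_insert]
  split
  · rw [Finset.card_insert_of_notMem
      (fun h => by simpa using Finset.mem_range.1 (Finset.mem_filter.1 h).1)]
  · simp

lemma shift_filter (P : ℕ → Prop) [DecidablePred P] (n : ℕ) :
    ((Finset.range (n+1)).filter P).card
      = ((Finset.range n).filter (fun j => P (j+1))).card + (if P 0 then 1 else 0) := by
  induction n with
  | zero =>
    rw [peel P 0]
    simp
  | succ n ih =>
    rw [peel P (n+1), ih, peel (fun j => P (j+1)) n]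
    split_ifs <;> omega


lemma cardA {γ : List ℕ} (hs : List.Pairwise (· ≥ ·) γ) (hdom : γ.headD 0 ≤ γ.length + 2) :
    ((cells (nu γ)).filter (fun c => Qp (nu γ) c ∧ ¬ c.1 = 0)).card
      = ((cells γ).filter (fun c => Qp γ c ∧ ¬ c.2 = 0)).card := by
  apply Finset.card_nbij' (i := fun c => (c.1 - 1, c.2 + 1)) (j := fun c => (c.1 + 1, c.2 - 1))
  · rintro ⟨a, b⟩ hc
    rw [Finset.mem_coe, Finset.mem_filter, mem_cells] at hc
    obtain ⟨hcell, hQ, hne⟩ := hc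
    obtain ⟨i, rfl⟩ : ∃ i, a = i + 1 := ⟨a - 1, by omega⟩
    rw [parts_nu_succ hs] at hcell
    have hple : parts γ i ≤ γ.length + 2 := le_trans (parts_le_head hs i) hdom
    have hb : b ≤ γ.length := by omega
    rw [Finset.mem_coe, Finset.mem_filter, mem_cells]
    unfold Qp at hQ ⊢
    simp only at hQ ⊢
    rw [parts_nu_succ hs, conj_nu hs hdom hb] at hQ
    refine ⟨by simp; omega, by simp; omega, by simp⟩
  · rintro ⟨a, b⟩ hc
    rw [Finset.mem_coe, Finset.mem_filter, mem_cells] at hc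
    obtain ⟨hcell, hQ, hne⟩ := hc
    simp only at hcell hne
    obtain ⟨j, rfl⟩ : ∃ j, b = j + 1 := ⟨b - 1, by omega⟩
    have hple : parts γ a ≤ γ.length + 2 := le_trans (parts_le_head hs a) hdom
    have hj : j ≤ γ.length := by omega
    rw [Finset.mem_coe, Finset.mem_filter, mem_cells]
    unfold Qp at hQ ⊢
    simp only [Nat.add_sub_cancel] at hQ ⊢
    rw [parts_nu_succ hs, conj_nu hs hdom hj]
    refine ⟨by omega, by omega, by simp⟩
  · rintro ⟨a, b⟩ hc
    rw [Finset.mem_coe, Finset.mem_filter] at hc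
    have : a ≠ 0 := hc.2.2
    simp only [Prod.mk.injEq]
    omega
  · rintro ⟨a, b⟩ hc
    rw [Finset.mem_coe, Finset.mem_filter] at hc
    have : b ≠ 0 := hc.2.2
    simp only [Prod.mk.injEq]
    omega


lemma cardB {γ : List ℕ} (hs : List.Pairwise (· ≥ ·) γ) (hpos : ∀ x ∈ γ, 0 < x)
    (hdom : γ.headD 0 ≤ γ.length + 2) :
    ((cells (nu γ)).filter (fun c => Qp (nu γ) c ∧ c.1 = 0)).card
      = ((cells γ).filter (fun c => Qp γ c ∧ c.2 = 0)).card + 1 := by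
  classical
  have hmono : ∀ i j : ℕ, i ≤ j → parts γ j ≤ parts γ i := fun i j h => parts_mono hs h
  have hc0 : conj γ 0 = γ.length := conj_zero hpos hs
  -- B = T
  have hB : ((cells γ).filter (fun c => Qp γ c ∧ c.2 = 0)).card
      = ((Finset.range γ.length).filter
          (fun i => parts γ i + i = γ.length ∨ parts γ i + i = γ.length + 1)).card := by
    apply Finset.card_nbij' (i := fun c => c.1) (j := fun i => (i, 0))
    · rintro ⟨a, b⟩ hc
      rw [Finset.mem_coe, Finset.mem_filter, mem_cells] at hc
      obtain ⟨hcell, hQ, hb0⟩ := hc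
      simp only at hcell hb0
      subst hb0
      have hQ' : parts γ a + a = conj γ 0 + 0 ∨ parts γ a + a = conj γ 0 + 0 + 1 := hQ
      rw [hc0] at hQ'
      dsimp only
      rw [Finset.mem_coe, Finset.mem_filter, Finset.mem_range]
      have ha : a < γ.length := by
        by_contra hcon
        rw [parts_eq_zero γ (le_of_not_gt hcon)] at hcell; omega
      exact ⟨ha, by rcases hQ' with h | h <;> omega⟩
    · intro i hi
      rw [Finset.mem_coe, Finset.mem_filter, Finset.mem_range] at hi
      obtain ⟨hi1, hi2⟩ := hi
      rw [Finset.mem_coe, Finset.mem_filter, mem_cells]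
      have hp : 0 < parts γ i := by rcases hi2 with h | h <;> omega
      refine ⟨hp, ?_, rfl⟩
      unfold Qp
      simp only [hc0]
      omega
    · rintro ⟨a, b⟩ hc
      rw [Finset.mem_coe, Finset.mem_filter] at hc
      have hb : b = 0 := hc.2.2
      show (a, (0:ℕ)) = (a, b)
      rw [hb]
    · intro i _
      rfl
  -- B' = U
  have hB' : ((cells (nu γ)).filter (fun c => Qp (nu γ) c ∧ c.1 = 0)).card
      = ((Finset.range (γ.length + 1)).filter
          (fun j => conj γ (j+1) + (j+1) = γ.length ∨ conj γ (j+1) + (j+1) = γ.length + 1)).card := by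
    apply Finset.card_nbij' (i := fun c => c.2) (j := fun j => (0, j))
    · rintro ⟨a, b⟩ hc
      rw [Finset.mem_coe, Finset.mem_filter, mem_cells] at hc
      obtain ⟨hcell, hQ, ha0⟩ := hc
      simp only at hcell ha0
      subst ha0
      rw [parts_nu_zero] at hcell
      have hb : b ≤ γ.length := by omega
      have hQ' : parts (nu γ) 0 + 0 = conj (nu γ) b + b ∨
          parts (nu γ) 0 + 0 = conj (nu γ) b + b + 1 := hQ
      rw [parts_nu_zero, conj_nu hs hdom hb] at hQ'
      dsimp only
      rw [Finset.mem_coe, Finset.mem_filter, Finset.mem_range]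
      exact ⟨by omega, by rcases hQ' with h | h <;> omega⟩
    · intro j hj
      rw [Finset.mem_coe, Finset.mem_filter, Finset.mem_range] at hj
      obtain ⟨hj1, hj2⟩ := hj
      have hjle : j ≤ γ.length := by omega
      rw [Finset.mem_coe, Finset.mem_filter, mem_cells]
      refine ⟨?_, ?_, rfl⟩
      · show j < parts (nu γ) 0
        rw [parts_nu_zero]; omega
      · show parts (nu γ) 0 + 0 = conj (nu γ) j + j ∨
          parts (nu γ) 0 + 0 = conj (nu γ) j + j + 1
        rw [parts_nu_zero, conj_nu hs hdom hjle]
        rcases hj2 with h | h <;> omega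
    · rintro ⟨a, b⟩ hc
      rw [Finset.mem_coe, Finset.mem_filter] at hc
      have ha : a = 0 := hc.2.2
      show ((0:ℕ), b) = (a, b)
      rw [ha]
    · intro j _
      rfl
  rw [hB, hB']
  set L := γ.length with hL
  -- split disjunctions
  have hsplit : ∀ (n : ℕ) (f : ℕ → ℕ),
      ((Finset.range n).filter (fun i => f i = L ∨ f i = L + 1)).card
        = ((Finset.range n).filter (fun i => f i = L)).card
          + ((Finset.range n).filter (fun i => f i = L + 1)).card := by
    intro n f
    rw [Finset.filter_or, Finset.card_union_of_disjoint]
    rw [Finset.disjoint_left]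
    intro a ha hb
    rw [Finset.mem_filter] at ha hb
    omega
  rw [hsplit, hsplit]
  -- parts side counts
  have hc1 : ((Finset.range (L+1)).filter (fun i => parts γ i + i = L)).card
      = ((Finset.range L).filter (fun i => parts γ i + i = L)).card + 1 := by
    rw [peel, if_pos (show parts γ L + L = L by rw [parts_eq_zero γ (le_refl L)]; omega)]
  have hc2 : ((Finset.range (L+2)).filter (fun i => parts γ i + i = L + 1)).card
      = ((Finset.range L).filter (fun i => parts γ i + i = L + 1)).card + 1 := by
    rw [show L + 2 = (L+1)+1 from rfl, peel,
      if_pos (show parts γ (L+1) + (L+1) = L + 1 by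
        rw [parts_eq_zero γ (by omega : γ.length ≤ L + 1)]; omega), peel,
      if_neg (show ¬ parts γ L + L = L + 1 by rw [parts_eq_zero γ (le_refl L)]; omega)]
  -- conj side counts
  have hd1 : ((Finset.range (L+1)).filter (fun k => conj γ k + k = L)).card
      = ((Finset.range L).filter (fun j => conj γ (j+1) + (j+1) = L)).card + 1 := by
    rw [shift_filter, if_pos (show conj γ 0 + 0 = L by rw [hc0]; omega)]
  have hd1' : ((Finset.range (L+1)).filter (fun j => conj γ (j+1) + (j+1) = L)).card
      = ((Finset.range L).filter (fun j => conj γ (j+1) + (j+1) = L)).card := by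
    rw [peel, if_neg (by omega)]
    omega
  have hd2 : ((Finset.range (L+2)).filter (fun k => conj γ k + k = L + 1)).card
      = ((Finset.range (L+1)).filter (fun j => conj γ (j+1) + (j+1) = L + 1)).card := by
    rw [show L + 2 = (L+1)+1 from rfl, shift_filter,
      if_neg (show ¬ conj γ 0 + 0 = L + 1 by rw [hc0]; omega)]
    omega
  have he1 := count_eq (γ := γ) hmono L
  have he2 := count_eq (γ := γ) hmono (L + 1)
  rw [show L + 1 + 1 = L + 2 from rfl] at he2
  omega

theorem stmt5 (γ : List ℕ) (hγ : IsPartition γ) (hdom : γ.headD 0 ≤ γ.length + 2) :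
    dinv (nu γ) = dinv γ + 1 ∧
    ((nu γ).sum : ℤ) - dinv (nu γ) = (γ.sum : ℤ) - dinv γ := by
  obtain ⟨hs, hpos⟩ := hγ
  have hsum : (nu γ).sum = γ.sum + 1 := nu_sum hpos
  have hd : dinv (nu γ) = dinv γ + 1 := by
    rw [dinv_eq_card, dinv_eq_card]
    rw [filter_split_card (cells (nu γ)) (Qp (nu γ)) (fun c => c.1 = 0),
      filter_split_card (cells γ) (Qp γ) (fun c => c.2 = 0)]
    have h1 := cardA hs hdom
    have h2 := cardB hs hpos hdom
    omega
  refine ⟨hd, ?_⟩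
  rw [hsum, hd]
  push_cast
  ring
end

section
/- Let F_j be the infinite (a_j, m_j, h_j)-staircase for 1 ≤ j ≤ s, and let F be their pointwise minimum (with domain the union of the domains, taking min over those F_j defined at each point). Then for every integer n ≥ 0, {i : F(i) ≤ n} = ⋃_{j : n ≥ h_j} [a_j, a_j + m_j + C(n,2) − C(h_j,2)]. -/
/-- `C2 n = n(n−1)/2`. -/
def C2 (n : ℤ) : ℤ := n * (n - 1) / 2

/-- The infinite `(a,m,h)`-staircase, intended for arguments `i ≥ a`:
the weakly increasing function whose values are `m+1` copies of `h` followed by,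
for each `p ≥ 1`, `h+p−1` copies of `h+p`.  Equivalently, `staircase a m h i` is
the least `n ≥ h` with `i ≤ a + m + C2 n − C2 h`. -/
noncomputable def staircase (a m h i : ℤ) : ℤ :=
  sInf {n : ℤ | h ≤ n ∧ i ≤ a + m + C2 n - C2 h}

lemma key_nonneg (z : ℤ) : 0 ≤ z * (z - 1) := by
  rcases le_or_gt z 0 with h | h
  · nlinarith
  · nlinarith

lemma C2_ge (n : ℤ) : n - 1 ≤ C2 n := by
  unfold C2
  have h1 : (n - 1) * 2 / 2 ≤ n * (n - 1) / 2 :=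
    Int.ediv_le_ediv (by norm_num) (by nlinarith [key_nonneg (n - 1)])
  rwa [Int.mul_ediv_cancel _ (by norm_num)] at h1

lemma C2_mono {x y : ℤ} (hx : 0 ≤ x) (hxy : x ≤ y) : C2 x ≤ C2 y := by
  unfold C2
  refine Int.ediv_le_ediv (by norm_num) ?_
  rcases le_or_gt x 0 with h | h
  · have hx0 : x = 0 := le_antisymm h hx
    subst hx0
    nlinarith [key_nonneg y]
  · nlinarith

lemma staircase_le_iff (a m h i n : ℤ) (hh : 0 ≤ h) :
    staircase a m h i ≤ n ↔ h ≤ n ∧ i ≤ a + m + C2 n - C2 h := by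
  set S := {n : ℤ | h ≤ n ∧ i ≤ a + m + C2 n - C2 h} with hS
  have hbdd : BddBelow S := ⟨h, fun x hx => hx.1⟩
  have hne : S.Nonempty := by
    refine ⟨max h (i - a - m + C2 h + 1), le_max_left _ _, ?_⟩
    have h1 := C2_ge (max h (i - a - m + C2 h + 1))
    have h2 := le_max_right h (i - a - m + C2 h + 1)
    linarith
  constructor
  · intro hle
    obtain ⟨h1, h2⟩ := Int.csInf_mem hne hbdd
    refine ⟨le_trans h1 hle, ?_⟩
    have := C2_mono (le_trans hh h1) hle
    linarith
  · intro ⟨h1, h2⟩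
    exact csInf_le hbdd ⟨h1, h2⟩

theorem stmt10 (s : ℕ) (a m h : Fin s → ℤ) (hm : ∀ j, 0 ≤ m j) (hh : ∀ j, 0 ≤ h j)
    (n : ℤ) (hn : 0 ≤ n) :
    -- "F(i) ≤ n" for the pointwise minimum F: some Fⱼ is defined at i and has value ≤ n
    {i : ℤ | ∃ j, a j ≤ i ∧ staircase (a j) (m j) (h j) i ≤ n} =
      ⋃ j ∈ {j | h j ≤ n}, Set.Icc (a j) (a j + m j + C2 n - C2 (h j)) := by
  ext i
  simp only [Set.mem_setOf_eq, Set.mem_iUnion, Set.mem_Icc, exists_prop]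
  constructor
  · rintro ⟨j, hai, hle⟩
    rw [staircase_le_iff _ _ _ _ _ (hh j)] at hle
    exact ⟨j, hle.1, hai, hle.2⟩
  · rintro ⟨j, hjn, hai, hi⟩
    exact ⟨j, hai, (staircase_le_iff _ _ _ _ _ (hh j)).2 ⟨hjn, hi⟩⟩
end

section
/- Let k ≥ 0, and suppose S = (γ(i) : i ≥ a) and S* = (δ(j) : j ≥ b) are sequences of partitions of deficit k with dinv(γ(i)) = i and dinv(δ(j)) = j for all indices. Let F(i) = mind(γ(i)) and G(j) = mind(δ(j)). Then Cat_{n,S}(q,t) = Cat_{n,S*}(t,q) for all n ≥ 0 if and only if for all integers n and i: F(i) ≤ n ⟺ G(C(n,2) − k − i) ≤ n (where a statement 'H(x) ≤ n' includes that x is in the domain of H). -/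
open MvPolynomial in
/-- `Cat_{n,S}(q,t) = Σ q^{C(n,2)−|γ|} t^{dinv γ}` over the members `γ(i)`, `i ≥ a`,
of the sequence `S` with `mind(γ(i)) ≤ n`; variable 0 is `q`, variable 1 is `t`. -/
noncomputable def CatSeq (a : ℕ) (γ : ℕ → List ℕ) (n : ℕ) : MvPolynomial (Fin 2) ℤ :=
  ∑ᶠ (i : ℕ) (_ : a ≤ i ∧ mind (γ i) ≤ n),
    X 0 ^ (n * (n - 1) / 2 - (γ i).sum) * X 1 ^ dinv (γ i)

open MvPolynomial in
/-- The same sum with the roles of `q` and `t` interchanged, i.e. `Cat_{n,S}(t,q)`. -/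
noncomputable def CatSeqSwap (a : ℕ) (γ : ℕ → List ℕ) (n : ℕ) : MvPolynomial (Fin 2) ℤ :=
  ∑ᶠ (i : ℕ) (_ : a ≤ i ∧ mind (γ i) ≤ n),
    X 1 ^ (n * (n - 1) / 2 - (γ i).sum) * X 0 ^ dinv (γ i)



open Finset MvPolynomial

lemma list_sum_eq (l : List ℕ) : l.sum = ∑ i ∈ Finset.range l.length, l.getD i 0 := by
  induction l with
  | nil => simp
  | cons x xs ih =>
    rw [List.sum_cons, List.length_cons, Finset.sum_range_succ', ih]
    simp [add_comm]

lemma mind_le_iff (γ : List ℕ) (n : ℕ) :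
    mind γ ≤ n ↔ ∀ i < γ.length, parts γ i + i + 1 ≤ n := by
  constructor
  · intro h i hi
    have hne : {n : ℕ | ∀ i < γ.length, parts γ i + i + 1 ≤ n}.Nonempty := by
      refine ⟨γ.sum + γ.length, fun j hj => ?_⟩
      have h1 : parts γ j ≤ γ.sum := by
        rw [list_sum_eq]
        exact Finset.single_le_sum (f := fun i => γ.getD i 0) (fun _ _ => Nat.zero_le _)
          (Finset.mem_range.2 hj)
      omega
    have hm := Nat.sInf_mem hne
    exact le_trans (hm i hi) h
  · intro h
    exact Nat.sInf_le h

lemma sum_le_of_mind_le {γ : List ℕ} {n : ℕ} (h : mind γ ≤ n) :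
    γ.sum ≤ n * (n - 1) / 2 := by
  have h' := (mind_le_iff γ n).1 h
  rw [list_sum_eq]
  calc ∑ i ∈ range γ.length, γ.getD i 0
      ≤ ∑ i ∈ range γ.length, (n - 1 - i) := by
        refine Finset.sum_le_sum fun i hi => ?_
        have := h' i (Finset.mem_range.1 hi)
        unfold parts at this
        omega
    _ ≤ ∑ i ∈ range (max γ.length n), (n - 1 - i) :=
        Finset.sum_le_sum_of_subset (Finset.range_subset_range.2 (le_max_left _ _))
    _ = ∑ i ∈ range n, (n - 1 - i) := by
        refine (Finset.sum_subset (Finset.range_subset_range.2 (le_max_right _ _)) ?_).symm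
        intro x hx hx'
        simp only [Finset.mem_range] at hx hx'
        omega
    _ = ∑ i ∈ range n, i := Finset.sum_range_reflect (fun i => i) n
    _ = n * (n - 1) / 2 := Finset.sum_range_id n

lemma C2_natCast (n : ℕ) : C2 (n : ℤ) = (n * (n - 1) / 2 : ℕ) := by
  unfold C2
  cases n with
  | zero => decide
  | succ m =>
    rw [show ((m+1) * ((m+1) - 1) : ℕ) = (m+1) * m from by simp, Int.natCast_div]
    push_cast
    ring_nf

lemma X_pow_mul_X_pow (e d : ℕ) :
    (X 0 : MvPolynomial (Fin 2) ℤ) ^ e * X 1 ^ d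
      = monomial (Finsupp.single 0 e + Finsupp.single 1 d) 1 := by
  rw [X_pow_eq_monomial, X_pow_eq_monomial, monomial_mul, one_mul]

lemma key1 (e e' d d' : ℕ) (h : (Finsupp.single (0 : Fin 2) e + Finsupp.single 1 d)
    = Finsupp.single 0 e' + Finsupp.single 1 d') : d = d' ∧ e = e' := by
  constructor
  · have := DFunLike.congr_fun h 1
    simpa [Finsupp.single_apply] using this
  · have := DFunLike.congr_fun h 0
    simpa [Finsupp.single_apply] using this

lemma catSeq_eq (k a : ℕ) (γ : ℕ → List ℕ)
    (hγ : ∀ i, a ≤ i → dinv (γ i) = i ∧ (γ i).sum = k + i) (n : ℕ) :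
    CatSeq a γ n = ∑ i ∈ (range (n*(n-1)/2 + 1)).filter (fun i => a ≤ i ∧ mind (γ i) ≤ n),
      monomial (Finsupp.single 0 (n*(n-1)/2 - (k + i)) + Finsupp.single 1 i) 1 := by
  have hcond : ∀ i : ℕ, (a ≤ i ∧ mind (γ i) ≤ n) ↔
      i ∈ (range (n*(n-1)/2 + 1)).filter (fun i => a ≤ i ∧ mind (γ i) ≤ n) := by
    intro i
    simp only [Finset.mem_filter, Finset.mem_range, iff_and_self]
    rintro ⟨h1, h2⟩
    have := sum_le_of_mind_le h2
    have := (hγ i h1).2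
    omega
  rw [CatSeq, finsum_cond_eq_sum_of_cond_iff _ (fun {x} _ => hcond x)]
  refine Finset.sum_congr rfl fun i hi => ?_
  obtain ⟨-, h1, h2⟩ := Finset.mem_filter.1 hi
  obtain ⟨hd, hs⟩ := hγ i h1
  rw [hd, hs, X_pow_mul_X_pow]

lemma catSeqSwap_eq (k b : ℕ) (δ : ℕ → List ℕ)
    (hδ : ∀ j, b ≤ j → dinv (δ j) = j ∧ (δ j).sum = k + j) (n : ℕ) :
    CatSeqSwap b δ n = ∑ j ∈ (range (n*(n-1)/2 + 1)).filter (fun j => b ≤ j ∧ mind (δ j) ≤ n),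
      monomial (Finsupp.single 0 j + Finsupp.single 1 (n*(n-1)/2 - (k + j))) 1 := by
  have hcond : ∀ j : ℕ, (b ≤ j ∧ mind (δ j) ≤ n) ↔
      j ∈ (range (n*(n-1)/2 + 1)).filter (fun j => b ≤ j ∧ mind (δ j) ≤ n) := by
    intro j
    simp only [Finset.mem_filter, Finset.mem_range, iff_and_self]
    rintro ⟨h1, h2⟩
    have := sum_le_of_mind_le h2
    have := (hδ j h1).2
    omega
  rw [CatSeqSwap, finsum_cond_eq_sum_of_cond_iff _ (fun {x} _ => hcond x)]
  refine Finset.sum_congr rfl fun j hj => ?_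
  obtain ⟨-, h1, h2⟩ := Finset.mem_filter.1 hj
  obtain ⟨hd, hs⟩ := hδ j h1
  rw [hd, hs, mul_comm, X_pow_mul_X_pow]

lemma coeff_catSeq (k a : ℕ) (γ : ℕ → List ℕ)
    (hγ : ∀ i, a ≤ i → dinv (γ i) = i ∧ (γ i).sum = k + i) (n i : ℕ) :
    coeff (Finsupp.single 0 (n*(n-1)/2 - (k + i)) + Finsupp.single 1 i) (CatSeq a γ n)
      = if a ≤ i ∧ mind (γ i) ≤ n then 1 else 0 := by
  rw [catSeq_eq k a γ hγ n, coeff_sum]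
  have key : ∀ i' : ℕ, (Finsupp.single (0 : Fin 2) (n*(n-1)/2 - (k + i')) + Finsupp.single 1 i'
      = Finsupp.single 0 (n*(n-1)/2 - (k + i)) + Finsupp.single 1 i) ↔ i' = i := by
    intro i'
    constructor
    · intro h
      exact (key1 _ _ _ _ h).1
    · rintro rfl; rfl
  simp only [coeff_monomial, key]
  rw [Finset.sum_ite_eq' _ i (fun _ => (1 : ℤ))]
  simp only [Finset.mem_filter, Finset.mem_range]
  by_cases h : a ≤ i ∧ mind (γ i) ≤ n
  · have hb : i < n*(n-1)/2 + 1 := by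
      have := sum_le_of_mind_le h.2
      have := (hγ i h.1).2
      omega
    rw [if_pos ⟨hb, h⟩, if_pos h]
  · rw [if_neg (fun hh => h hh.2), if_neg h]

lemma coeff_catSeqSwap (k b : ℕ) (δ : ℕ → List ℕ)
    (hδ : ∀ j, b ≤ j → dinv (δ j) = j ∧ (δ j).sum = k + j) (n i : ℕ) :
    coeff (Finsupp.single 0 (n*(n-1)/2 - (k + i)) + Finsupp.single 1 i) (CatSeqSwap b δ n)
      = if b ≤ n*(n-1)/2 - (k + i) ∧ mind (δ (n*(n-1)/2 - (k + i))) ≤ n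
          ∧ n*(n-1)/2 - (k + (n*(n-1)/2 - (k + i))) = i then 1 else 0 := by
  set C := n*(n-1)/2 with hC
  set c := C - (k + i) with hc
  rw [catSeqSwap_eq k b δ hδ n, coeff_sum]
  rw [← hC]
  have key : ∀ j : ℕ, (Finsupp.single (0 : Fin 2) j + Finsupp.single 1 (C - (k + j))
      = Finsupp.single 0 c + Finsupp.single 1 i) ↔ (j = c ∧ C - (k + j) = i) := by
    intro j
    constructor
    · intro h
      exact ⟨(key1 _ _ _ _ h).2, (key1 _ _ _ _ h).1⟩
    · rintro ⟨rfl, h2⟩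
      rw [h2]
  simp only [coeff_monomial, key, ite_and]
  rw [Finset.sum_ite_eq' _ c (fun j => if C - (k + j) = i then (1 : ℤ) else 0)]
  simp only [Finset.mem_filter, Finset.mem_range]
  have hb : (b ≤ c ∧ mind (δ c) ≤ n) → c < C + 1 := by
    rintro ⟨hb1, hb2⟩
    have := sum_le_of_mind_le hb2
    have := (hδ c hb1).2
    omega
  split_ifs <;> first | rfl | tauto

theorem stmt17 (k a b : ℕ) (γ δ : ℕ → List ℕ)
    (hγ : ∀ i, a ≤ i → IsPartition (γ i) ∧ dinv (γ i) = i ∧ (γ i).sum = k + i)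
    (hδ : ∀ j, b ≤ j → IsPartition (δ j) ∧ dinv (δ j) = j ∧ (δ j).sum = k + j) :
    (∀ n : ℕ, CatSeq a γ n = CatSeqSwap b δ n) ↔
    (∀ n i : ℤ,
      (∃ i' : ℕ, (i' : ℤ) = i ∧ a ≤ i' ∧ (mind (γ i') : ℤ) ≤ n) ↔
      (∃ j' : ℕ, (j' : ℤ) = C2 n - k - i ∧ b ≤ j' ∧ (mind (δ j') : ℤ) ≤ n)) := by
  have hγ' : ∀ i, a ≤ i → dinv (γ i) = i ∧ (γ i).sum = k + i :=
    fun i hi => ⟨(hγ i hi).2.1, (hγ i hi).2.2⟩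
  have hδ' : ∀ j, b ≤ j → dinv (δ j) = j ∧ (δ j).sum = k + j :=
    fun j hj => ⟨(hδ j hj).2.1, (hδ j hj).2.2⟩
  constructor
  · intro hpoly n i
    rcases lt_or_ge n 0 with hn | hn
    · constructor
      · rintro ⟨i', -, -, h3⟩
        have : (0:ℤ) ≤ (mind (γ i') : ℤ) := Int.natCast_nonneg _
        omega
      · rintro ⟨j', -, -, h3⟩
        have : (0:ℤ) ≤ (mind (δ j') : ℤ) := Int.natCast_nonneg _
        omega
    · obtain ⟨m, rfl⟩ := Int.eq_ofNat_of_zero_le hn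
      have hC := C2_natCast m
      rcases lt_or_ge i 0 with hi | hi
      · constructor
        · rintro ⟨i', h1, -, -⟩
          have : (0:ℤ) ≤ (i' : ℤ) := Int.natCast_nonneg _
          omega
        · rintro ⟨j', h1, hb2, h3⟩
          have h3' : mind (δ j') ≤ m := by exact_mod_cast h3
          have hle := sum_le_of_mind_le h3'
          have hs := (hδ' j' hb2).2
          omega
      · obtain ⟨i₀, rfl⟩ := Int.eq_ofNat_of_zero_le hi
        have hcoeff := congrArg
          (coeff (Finsupp.single 0 (m*(m-1)/2 - (k + i₀)) + Finsupp.single 1 i₀)) (hpoly m)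
        rw [coeff_catSeq k a γ hγ' m i₀, coeff_catSeqSwap k b δ hδ' m i₀] at hcoeff
        have hiff : (a ≤ i₀ ∧ mind (γ i₀) ≤ m) ↔
            (b ≤ m*(m-1)/2 - (k + i₀) ∧ mind (δ (m*(m-1)/2 - (k + i₀))) ≤ m
              ∧ m*(m-1)/2 - (k + (m*(m-1)/2 - (k + i₀))) = i₀) := by
          constructor
          · intro h
            by_contra h'
            rw [if_pos h, if_neg h'] at hcoeff
            exact one_ne_zero hcoeff
          · intro h
            by_contra h'
            rw [if_neg h', if_pos h] at hcoeff
            exact one_ne_zero hcoeff.symm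
        constructor
        · rintro ⟨i', h1, h2, h3⟩
          have hii : i' = i₀ := by exact_mod_cast h1
          subst hii
          have h3' : mind (γ i') ≤ m := by exact_mod_cast h3
          obtain ⟨hb1, hm1, heq⟩ := hiff.1 ⟨h2, h3'⟩
          have hle : k + i' ≤ m*(m-1)/2 := by
            have := sum_le_of_mind_le h3'
            have := (hγ' i' h2).2
            omega
          exact ⟨m*(m-1)/2 - (k + i'), by omega, hb1, by exact_mod_cast hm1⟩
        · rintro ⟨j', h1, hb2, h3⟩
          have h3' : mind (δ j') ≤ m := by exact_mod_cast h3
          have hle : k + j' ≤ m*(m-1)/2 := by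
            have := sum_le_of_mind_le h3'
            have := (hδ' j' hb2).2
            omega
          have hj : j' = m*(m-1)/2 - (k + i₀) := by omega
          subst hj
          have hres := hiff.2 ⟨hb2, h3', by omega⟩
          exact ⟨i₀, rfl, hres.1, by exact_mod_cast hres.2⟩
  · intro hint n
    rw [catSeq_eq k a γ hγ' n, catSeqSwap_eq k b δ hδ' n]
    have hC := C2_natCast n
    have hmapγ : ∀ i ∈ (range (n*(n-1)/2 + 1)).filter (fun i => a ≤ i ∧ mind (γ i) ≤ n),
        b ≤ n*(n-1)/2 - (k+i) ∧ mind (δ (n*(n-1)/2 - (k+i))) ≤ n ∧ k + i ≤ n*(n-1)/2 := by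
      intro i hi
      obtain ⟨-, h1, h2⟩ := Finset.mem_filter.1 hi
      have hle : k + i ≤ n*(n-1)/2 := by
        have := sum_le_of_mind_le h2
        have := (hγ' i h1).2
        omega
      obtain ⟨j', hj1, hj2, hj3⟩ := (hint (n:ℤ) (i:ℤ)).1 ⟨i, rfl, h1, by exact_mod_cast h2⟩
      have hj : j' = n*(n-1)/2 - (k+i) := by omega
      subst hj
      exact ⟨hj2, by exact_mod_cast hj3, hle⟩
    have hmapδ : ∀ j ∈ (range (n*(n-1)/2 + 1)).filter (fun j => b ≤ j ∧ mind (δ j) ≤ n),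
        a ≤ n*(n-1)/2 - (k+j) ∧ mind (γ (n*(n-1)/2 - (k+j))) ≤ n ∧ k + j ≤ n*(n-1)/2 := by
      intro j hj
      obtain ⟨-, h1, h2⟩ := Finset.mem_filter.1 hj
      have hle : k + j ≤ n*(n-1)/2 := by
        have := sum_le_of_mind_le h2
        have := (hδ' j h1).2
        omega
      obtain ⟨i', hi1, hi2, hi3⟩ := (hint (n:ℤ) (C2 (n:ℤ) - k - j)).2
        ⟨j, by omega, h1, by exact_mod_cast h2⟩
      have hij : i' = n*(n-1)/2 - (k+j) := by omega
      subst hij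
      exact ⟨hi2, by exact_mod_cast hi3, hle⟩
    refine Finset.sum_bij' (fun i _ => n*(n-1)/2 - (k + i)) (fun j _ => n*(n-1)/2 - (k + j))
      ?_ ?_ ?_ ?_ ?_
    · intro i hi
      obtain ⟨hm1, hm2, hm3⟩ := hmapγ i hi
      simp only [Finset.mem_filter, Finset.mem_range]
      exact ⟨by omega, hm1, hm2⟩
    · intro j hj
      obtain ⟨hm1, hm2, hm3⟩ := hmapδ j hj
      simp only [Finset.mem_filter, Finset.mem_range]
      exact ⟨by omega, hm1, hm2⟩
    · intro i hi
      have := (hmapγ i hi).2.2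
      show n*(n-1)/2 - (k + (n*(n-1)/2 - (k + i))) = i
      omega
    · intro j hj
      have := (hmapδ j hj).2.2
      show n*(n-1)/2 - (k + (n*(n-1)/2 - (k + j))) = j
      omega
    · intro i hi
      have hle := (hmapγ i hi).2.2
      show _ = monomial (Finsupp.single (0:Fin 2) (n*(n-1)/2 - (k + i))
        + Finsupp.single 1 (n*(n-1)/2 - (k + (n*(n-1)/2 - (k + i))))) 1
      rw [show n*(n-1)/2 - (k + (n*(n-1)/2 - (k + i))) = i from by omega]
end
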